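/- Let Σ = Σ_1 ∪ ⋯ ∪ Σ_k be a partition of the alphabet into pairwise disjoint nonempty blocks and let L ⊆ Σ* be closed under the associated partial commutation. Then for every word w ∈ Σ*: w ∈ L if and only if π_{Σ_1}(w)π_{Σ_2}(w)⋯π_{Σ_k}(w) ∈ L; moreover w ≡_L π_{Σ_1}(w)π_{Σ_2}(w)⋯π_{Σ_k}(w). -/

import Mathlib

/-- The Nerode right-congruence of a language `L`: `u ≡_L v` iff
for all words `x`, `u ++ x ∈ L ↔ v ++ x ∈ L`. -/
def NerodeEq {α : Type*} (L : Set (List α)) (u v : List α) : Prop :=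
  ∀ x : List α, u ++ x ∈ L ↔ v ++ x ∈ L

/-- The Nerode right-congruence as a setoid on words. -/
def nerodeSetoid {α : Type*} (L : Set (List α)) : Setoid (List α) where
  r := NerodeEq L
  iseqv := ⟨fun _ _ => Iff.rfl, fun h x => (h x).symm, fun h1 h2 x => (h1 x).trans (h2 x)⟩

/-- A language is regular iff its Nerode right-congruence has finitely many classes. -/
def RegularLang {α : Type*} (L : Set (List α)) : Prop :=
  Finite (Quotient (nerodeSetoid L))

/-- The state complexity of `L`: the number of Nerode right-congruence classes. -/
noncomputable def sc {α : Type*} (L : Set (List α)) : ℕ :=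
  Nat.card (Quotient (nerodeSetoid L))

/-- A language is commutative if membership only depends on the number of
occurrences of each letter. -/
def CommutativeLang {α : Type*} [DecidableEq α] (L : Set (List α)) : Prop :=
  ∀ u v : List α, (∀ x : α, u.count x = v.count x) → (u ∈ L ↔ v ∈ L)

/-- A (commutative) language has a product-form minimal automaton iff for all words
`u, v`: `u ≡_L v` holds if and only if `x^{|u|_x} ≡_L x^{|v|_x}` for every letter `x`. -/
def HasProductForm {α : Type*} [DecidableEq α] (L : Set (List α)) : Prop :=
  ∀ u v : List α,
    NerodeEq L u v ↔
      ∀ x : α, NerodeEq L (List.replicate (u.count x) x) (List.replicate (v.count x) x)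

/-- With a partition of the alphabet encoded by a coloring `c : α → Fin k`
(block `Σ_i = c⁻¹(i)`), `projC c i w` is the projection `π_{Σ_i}(w)`. -/
def projC {α : Type*} {k : ℕ} (c : α → Fin k) (i : Fin k) (w : List α) : List α :=
  w.filter (fun x => c x = i)

/-- `L` is closed under the partial commutation associated with the partition
encoded by `c : α → Fin k`: letters in distinct blocks commute. -/
def PartialCommClosed {α : Type*} {k : ℕ} (c : α → Fin k) (L : Set (List α)) : Prop :=
  ∀ x y : α, c x ≠ c y → ∀ u v : List α,
    (u ++ x :: y :: v ∈ L ↔ u ++ y :: x :: v ∈ L)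


section Aux
variable {α : Type*} {k : ℕ}

/-- Two-sided syntactic equivalence. -/
def Etc (L : Set (List α)) (u v : List α) : Prop :=
  ∀ p s : List α, p ++ (u ++ s) ∈ L ↔ p ++ (v ++ s) ∈ L

lemma Etc.refl {L : Set (List α)} (u : List α) : Etc L u u := fun _ _ => Iff.rfl

lemma Etc.trans {L : Set (List α)} {u v w : List α} (h1 : Etc L u v) (h2 : Etc L v w) :
    Etc L u w := fun p s => (h1 p s).trans (h2 p s)

lemma Etc.cons {L : Set (List α)} {u v : List α} (a : α) (h : Etc L u v) :
    Etc L (a :: u) (a :: v) := fun p s => by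
  simpa [List.append_assoc] using h (p ++ [a]) s

lemma Etc.appendRight {L : Set (List α)} {u v : List α} (h : Etc L u v) (w : List α) :
    Etc L (u ++ w) (v ++ w) := fun p s => by
  simpa [List.append_assoc] using h p (w ++ s)

lemma Etc.appendLeft {L : Set (List α)} {u v : List α} (h : Etc L u v) (w : List α) :
    Etc L (w ++ u) (w ++ v) := fun p s => by
  simpa [List.append_assoc] using h (p ++ w) s

lemma Etc.swap {c : α → Fin k} {L : Set (List α)} (hL : PartialCommClosed c L)
    {x y : α} (hxy : c x ≠ c y) : Etc L [x, y] [y, x] := fun p s => by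
  simpa using hL x y hxy p s

lemma Etc.move {c : α → Fin k} {L : Set (List α)} (hL : PartialCommClosed c L) (a : α) :
    ∀ u : List α, (∀ b ∈ u, c b ≠ c a) → Etc L (a :: u) (u ++ [a])
  | [], _ => Etc.refl _
  | b :: t, h => by
    have h1 : Etc L [a, b] [b, a] := Etc.swap hL (h b List.mem_cons_self).symm
    have h2 := h1.appendRight t
    have h3 := (Etc.move hL a t (fun x hx => h x (List.mem_cons_of_mem _ hx))).cons b
    refine Etc.trans ?_ (Etc.trans h3 ?_)
    · simpa using h2
    · simp [Etc.refl]

def Gc (c : α → Fin k) (is : List (Fin k)) (w : List α) : List α :=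
  (is.map (fun i => projC c i w)).flatten

lemma projC_cons (c : α → Fin k) (i : Fin k) (a : α) (t : List α) :
    projC c i (a :: t) = if c a = i then a :: projC c i t else projC c i t := by
  simp [projC, List.filter_cons]

lemma mem_projC_color {c : α → Fin k} {i : Fin k} {t : List α} {b : α}
    (hb : b ∈ projC c i t) : c b = i := by
  simpa using List.of_mem_filter hb

lemma Etc.sortStep {c : α → Fin k} {L : Set (List α)} (hL : PartialCommClosed c L)
    (a : α) (t : List α) :
    ∀ is : List (Fin k), is.Nodup → c a ∈ is →
      Etc L (a :: Gc c is t) (Gc c is (a :: t))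
  | [], _, hm => absurd hm (by simp)
  | i :: is, hnd, hm => by
    by_cases hia : c a = i
    · have hni : c a ∉ is := by
        rw [hia]; exact (List.nodup_cons.mp hnd).1
      have hmap : (is.map fun j => if c a = j then a :: projC c j t else projC c j t)
          = is.map fun j => projC c j t :=
        List.map_congr_left (fun j hj => if_neg (fun hh : c a = j => hni (hh ▸ hj)))
      have : Gc c (i :: is) (a :: t) = a :: Gc c (i :: is) t := by
        simp only [Gc, List.map_cons, List.flatten_cons, projC_cons, if_pos hia, hmap,
          List.cons_append]
      rw [this]
      exact Etc.refl _
    · have hm' : c a ∈ is := by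
        rcases List.mem_cons.mp hm with h | h
        · exact absurd h hia
        · exact h
      have ih := Etc.sortStep hL a t is (List.nodup_cons.mp hnd).2 hm'
      have step1 : Etc L (a :: projC c i t) (projC c i t ++ [a]) :=
        Etc.move hL a _ (fun b hb => by rw [mem_projC_color hb]; exact fun hh => hia hh.symm)
      have step1' := step1.appendRight (Gc c is t)
      have step2 := ih.appendLeft (projC c i t)
      have heq : Gc c (i :: is) (a :: t) = projC c i t ++ Gc c is (a :: t) := by
        simp only [Gc, List.map_cons, List.flatten_cons, projC_cons, if_neg hia]
      rw [heq]
      have e1 : Etc L (a :: Gc c (i :: is) t) ((a :: projC c i t) ++ Gc c is t) := by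
        simp only [Gc, List.map_cons, List.flatten_cons, List.cons_append]
        exact Etc.refl _
      refine e1.trans (step1'.trans ?_)
      refine Etc.trans ?_ step2
      simp only [List.append_assoc, List.singleton_append]
      exact Etc.refl _

lemma Etc.sorted {c : α → Fin k} {L : Set (List α)} (hL : PartialCommClosed c L) :
    ∀ w : List α, Etc L w (Gc c (List.finRange k) w)
  | [] => by
    have h0 : Gc c (List.finRange k) [] = [] := by simp [Gc, projC]
    rw [h0]; exact Etc.refl _
  | a :: t => by
    have ih := (Etc.sorted hL t).cons a
    exact ih.trans (Etc.sortStep hL a t _ (List.nodup_finRange k) (List.mem_finRange _))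

end Aux

/-- If `L` is closed under the partial commutation associated with the partition
`Σ = Σ_1 ∪ ⋯ ∪ Σ_k`, then for every word `w`:
`w ∈ L ↔ π_{Σ_1}(w)π_{Σ_2}(w)⋯π_{Σ_k}(w) ∈ L`, and moreover
`w ≡_L π_{Σ_1}(w)π_{Σ_2}(w)⋯π_{Σ_k}(w)`. -/
theorem stmt13 {α : Type*} {k : ℕ} (c : α → Fin k) (hsurj : Function.Surjective c)
    (L : Set (List α)) (hL : PartialCommClosed c L) (w : List α) :
    (w ∈ L ↔ (List.ofFn fun i : Fin k => projC c i w).flatten ∈ L) ∧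
    NerodeEq L w (List.ofFn fun i : Fin k => projC c i w).flatten := by
  have hofn : (List.ofFn fun i : Fin k => projC c i w).flatten = Gc c (List.finRange k) w := by
    simp [Gc, List.ofFn_eq_map]
  have key := Etc.sorted hL w
  have hner : NerodeEq L w (List.ofFn fun i : Fin k => projC c i w).flatten := by
    intro x
    rw [hofn]
    simpa using key [] x
  exact ⟨by simpa using hner [], hner⟩
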